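/- (Reduction to canonical form) Let T = {φ₁, …, φₙ, Δ} be a theory consisting of first-order sentences φ₁, …, φₙ and a definition Δ, and let P_t be a 0-ary predicate symbol occurring neither in the φᵢ nor in Δ. Then T is strongly voc(T)-equivalent to the canonical theory {P_t, Δ ∪ {P_t ← φ₁ ∧ … ∧ φₙ}}: every model of T expands uniquely to a model of the canonical theory, and every model of the canonical theory restricted to voc(T) is a model of T. -/

import Mathlib

namespace LazyMX

/-- The four truth values: true, false, unknown, inconsistent. -/
inductive TV : Type where
  | t | f | u | i
deriving DecidableEq

namespace TV

/-- The truth order `f <_t u <_t t`, `f <_t i <_t t`. -/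
def truthLe (a b : TV) : Prop := a = b ∨ a = f ∨ b = t

/-- The precision order `u <_p t <_p i`, `u <_p f <_p i`. -/
def precLe (a b : TV) : Prop := a = b ∨ a = u ∨ b = i

/-- The inverse of a truth value. -/
def inv : TV → TV
  | t => f
  | f => t
  | u => u
  | i => i

open Classical in
/-- Greatest lower bound of a set of truth values w.r.t. the truth order. -/
noncomputable def sInf (S : Set TV) : TV :=
  if f ∈ S ∨ (u ∈ S ∧ i ∈ S) then f
  else if u ∈ S then u
  else if i ∈ S then i
  else t

open Classical in
/-- Least upper bound of a set of truth values w.r.t. the truth order. -/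
noncomputable def sSup (S : Set TV) : TV :=
  if t ∈ S ∨ (u ∈ S ∧ i ∈ S) then t
  else if u ∈ S then u
  else if i ∈ S then i
  else f

/-- Minimum (meet) of two truth values under the truth order. -/
noncomputable def tmin (a b : TV) : TV := sInf {a, b}

/-- Maximum (join) of two truth values under the truth order. -/
noncomputable def tmax (a b : TV) : TV := sSup {a, b}

end TV

/-- A (function-free) vocabulary: a type of predicate symbols with arities. -/
structure Voc : Type 1 where
  Pred : Type
  arity : Pred → ℕ

/-- A domain atom `P(d₁,…,dₙ)`. -/
structure Atom (σ : Voc) (D : Type) : Type where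
  pred : σ.Pred
  args : Fin (σ.arity pred) → D

/-- A domain literal: an atom or its negation. -/
inductive Lit (σ : Voc) (D : Type) : Type where
  | pos : Atom σ D → Lit σ D
  | neg : Atom σ D → Lit σ D

namespace Lit
variable {σ : Voc} {D : Type}

def atom : Lit σ D → Atom σ D
  | pos a => a
  | neg a => a

def negate : Lit σ D → Lit σ D
  | pos a => neg a
  | neg a => pos a

def isNeg : Lit σ D → Prop
  | pos _ => False
  | neg _ => True

/-- The truth value a literal asks for: `t` for a positive, `f` for a negative literal. -/
def sign : Lit σ D → TV
  | pos _ => TV.t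
  | neg _ => TV.f

end Lit

/-- A four-valued structure with domain `D`: an assignment of truth values to domain atoms. -/
def Struct (σ : Voc) (D : Type) : Type := Atom σ D → TV

variable {σ : Voc} {D : Type}

def TwoValued (I : Struct σ D) : Prop := ∀ a, I a = TV.t ∨ I a = TV.f

def ThreeValued (I : Struct σ D) : Prop := ∀ a, I a ≠ TV.i

/-- `J` expands `I` (`I ≤_p J` pointwise). -/
def ExpandsS (I J : Struct σ D) : Prop := ∀ a, TV.precLe (I a) (J a)

/-- A set of domain literals is consistent if no atom occurs both positively and negatively. -/
def ConsistentSet (S : Set (Lit σ D)) : Prop := ∀ a, ¬ (Lit.pos a ∈ S ∧ Lit.neg a ∈ S)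

open Classical in
/-- The four-valued structure corresponding to a set of domain literals. -/
noncomputable def toStruct (S : Set (Lit σ D)) : Struct σ D := fun a =>
  if Lit.pos a ∈ S then (if Lit.neg a ∈ S then TV.i else TV.t)
  else (if Lit.neg a ∈ S then TV.f else TV.u)

/-- A literal is true in a structure. -/
def litTrue (I : Struct σ D) : Lit σ D → Prop
  | Lit.pos a => I a = TV.t
  | Lit.neg a => I a = TV.f

/-- A literal is false in a structure. -/
def litFalse (I : Struct σ D) : Lit σ D → Prop
  | Lit.pos a => I a = TV.f
  | Lit.neg a => I a = TV.t

/-- First-order formulas over domain atoms, with quantifiers ranging over explicitly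
given subsets of the domain; quantified bodies are represented as `D`-indexed families
(`b d` is the instance `φ[x↦d]`). -/
inductive Formula (σ : Voc) (D : Type) : Type where
  | atom : Atom σ D → Formula σ D
  | not : Formula σ D → Formula σ D
  | and : Formula σ D → Formula σ D → Formula σ D
  | or : Formula σ D → Formula σ D → Formula σ D
  | all : Set D → (D → Formula σ D) → Formula σ D
  | ex : Set D → (D → Formula σ D) → Formula σ D

/-- The standard four-valued truth assignment. -/
noncomputable def Formula.eval (I : Struct σ D) : Formula σ D → TV
  | Formula.atom a => I a
  | Formula.not φ => (φ.eval I).inv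
  | Formula.and φ ψ => TV.tmin (φ.eval I) (ψ.eval I)
  | Formula.or φ ψ => TV.tmax (φ.eval I) (ψ.eval I)
  | Formula.all D' b => TV.sInf { v | ∃ d ∈ D', (b d).eval I = v }
  | Formula.ex D' b => TV.sSup { v | ∃ d ∈ D', (b d).eval I = v }

/-- The predicate symbols occurring in a formula. -/
def Formula.preds : Formula σ D → Set σ.Pred
  | Formula.atom a => {a.pred}
  | Formula.not φ => φ.preds
  | Formula.and φ ψ => φ.preds ∪ ψ.preds
  | Formula.or φ ψ => φ.preds ∪ ψ.preds
  | Formula.all _ b => ⋃ d, (b d).preds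
  | Formula.ex _ b => ⋃ d, (b d).preds

/-- A rule `∀ x̄ ∈ D̄ : P(x̄) ← φ`; `body d̄` is the instantiated body `φ[x̄↦d̄]`. -/
structure Rule (σ : Voc) (D : Type) : Type where
  head : σ.Pred
  dom : Set (Fin (σ.arity head) → D)
  body : (Fin (σ.arity head) → D) → Formula σ D

/-- A definition: a set of rules. -/
abbrev Defn (σ : Voc) (D : Type) := Set (Rule σ D)

/-- The rule `r` defines the atom `a`. -/
def Rule.defines (r : Rule σ D) (a : Atom σ D) : Prop :=
  ∃ d ∈ r.dom, a = ⟨r.head, d⟩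

def definedAtom (Δ : Defn σ D) (a : Atom σ D) : Prop := ∃ r ∈ Δ, r.defines a

def openAtom (Δ : Defn σ D) (a : Atom σ D) : Prop := ¬ definedAtom Δ a

def definedLit (Δ : Defn σ D) (l : Lit σ D) : Prop := definedAtom Δ l.atom

def openLit (Δ : Defn σ D) (l : Lit σ D) : Prop := ¬ definedAtom Δ l.atom

/-- Each domain atom is defined by at most one rule. -/
def WellFormed (Δ : Defn σ D) : Prop :=
  ∀ a r₁ r₂, r₁ ∈ Δ → r₂ ∈ Δ → r₁.defines a → r₂.defines a → r₁ = r₂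

/-- The value of the body of the rule instance defining `a`, evaluated in `I`. -/
noncomputable def bodyVal (Δ : Defn σ D) (I : Struct σ D) (a : Atom σ D) : TV :=
  TV.sSup { v | ∃ r ∈ Δ, ∃ d ∈ r.dom, a = ⟨r.head, d⟩ ∧ (r.body d).eval I = v }

open Classical in
/-- Combine a lower set `x` and an upper set `y` of defined atoms with an interpretation
`Io` of the open atoms into a four-valued structure. -/
noncomputable def combine (Δ : Defn σ D) (Io : Struct σ D) (x y : Set (Atom σ D)) :
    Struct σ D := fun a =>
  if definedAtom Δ a then
    (if a ∈ x then (if a ∈ y then TV.t else TV.i) else (if a ∈ y then TV.u else TV.f))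
  else Io a

/-- Lower component of the four-valued immediate consequence operator. -/
def lowerOp (Δ : Defn σ D) (Io : Struct σ D) (x y : Set (Atom σ D)) : Set (Atom σ D) :=
  { a | definedAtom Δ a ∧
      (bodyVal Δ (combine Δ Io x y) a = TV.t ∨ bodyVal Δ (combine Δ Io x y) a = TV.i) }

/-- Upper component of the four-valued immediate consequence operator. -/
def upperOp (Δ : Defn σ D) (Io : Struct σ D) (x y : Set (Atom σ D)) : Set (Atom σ D) :=
  { a | definedAtom Δ a ∧
      (bodyVal Δ (combine Δ Io x y) a = TV.t ∨ bodyVal Δ (combine Δ Io x y) a = TV.u) }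

/-- Stable revision, lower half: least fixpoint of the lower operator with `y` fixed. -/
def stableLower (Δ : Defn σ D) (Io : Struct σ D) (y : Set (Atom σ D)) : Set (Atom σ D) :=
  ⋂₀ { x | lowerOp Δ Io x y ⊆ x }

/-- Stable revision, upper half: least fixpoint of the upper operator with `x` fixed. -/
def stableUpper (Δ : Defn σ D) (Io : Struct σ D) (x : Set (Atom σ D)) : Set (Atom σ D) :=
  ⋂₀ { y | upperOp Δ Io x y ⊆ y }

/-- Precision-prefixpoints of the stable revision operator. -/
def wfPrefixpoints (Δ : Defn σ D) (Io : Struct σ D) :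
    Set (Set (Atom σ D) × Set (Atom σ D)) :=
  { p | stableLower Δ Io p.2 ⊆ p.1 ∧ p.2 ⊆ stableUpper Δ Io p.1 }

/-- Lower half of the well-founded fixpoint (the precision-least fixpoint of stable revision). -/
def wfLower (Δ : Defn σ D) (Io : Struct σ D) : Set (Atom σ D) :=
  ⋂₀ (Prod.fst '' wfPrefixpoints Δ Io)

/-- Upper half of the well-founded fixpoint. -/
def wfUpper (Δ : Defn σ D) (Io : Struct σ D) : Set (Atom σ D) :=
  ⋃₀ (Prod.snd '' wfPrefixpoints Δ Io)

/-- The (parametrized) well-founded model `wf_Δ(Io|open(Δ))` of `Δ`; it agrees with `Io`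
on the open atoms and is the well-founded fixpoint on the defined atoms. -/
noncomputable def wfModel (Δ : Defn σ D) (Io : Struct σ D) : Struct σ D :=
  combine Δ Io (wfLower Δ Io) (wfUpper Δ Io)

/-- A two-valued structure is a model of the definition `Δ` if it equals the well-founded
model of `Δ` relative to its restriction to the open atoms. -/
def IsModelOfDef (I : Struct σ D) (Δ : Defn σ D) : Prop :=
  TwoValued I ∧ ∀ a, I a = wfModel Δ I a

/-- `Δ` is total: the well-founded model is two-valued for every two-valued
interpretation of the open atoms. -/
def IsTotalDef (Δ : Defn σ D) : Prop :=
  ∀ Io : Struct σ D, TwoValued Io → TwoValued (wfModel Δ Io)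

/-- A model of the canonical theory `{P_t, Δ}`. -/
def IsModelOfTheory (I : Struct σ D) (pt : Atom σ D) (Δ : Defn σ D) : Prop :=
  IsModelOfDef I Δ ∧ I pt = TV.t

/-- A direct justification for a defined literal `l`: a consistent nonempty set `S` of
domain literals making the body of the rule instance defining `l.atom` true
(for positive `l`) resp. false (for negative `l`). -/
def IsDirectJust (Δ : Defn σ D) (l : Lit σ D) (S : Set (Lit σ D)) : Prop :=
  ConsistentSet S ∧ S.Nonempty ∧
    ∃ r ∈ Δ, ∃ d ∈ r.dom, l.atom = ⟨r.head, d⟩ ∧ (r.body d).eval (toStruct S) = l.sign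

/-- A justification over `Δ`: a graph assigning to each literal either no children or a
direct justification. -/
def IsJustification (Δ : Defn σ D) (J : Lit σ D → Set (Lit σ D)) : Prop :=
  ∀ l, J l = ∅ ∨ IsDirectJust Δ l (J l)

/-- Reachability in the justification graph. -/
def Reach (J : Lit σ D → Set (Lit σ D)) : Lit σ D → Lit σ D → Prop :=
  Relation.ReflTransGen (fun x y => y ∈ J x)

/-- The nodes of the subgraph `J_L` reachable from the set `L` of literals. -/
def reachSet (J : Lit σ D → Set (Lit σ D)) (L : Set (Lit σ D)) : Set (Lit σ D) :=
  { x | ∃ l ∈ L, Reach J l x }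

/-- `J` is total for `L`: `J` is defined in every defined literal reachable from `L`. -/
def TotalFor (Δ : Defn σ D) (J : Lit σ D → Set (Lit σ D)) (L : Set (Lit σ D)) : Prop :=
  ∀ x ∈ reachSet J L, definedLit Δ x → J x ≠ ∅

/-- An infinite path in the subgraph `J_l`. -/
def IsInfPathFrom (J : Lit σ D → Set (Lit σ D)) (l : Lit σ D) (p : ℕ → Lit σ D) : Prop :=
  Reach J l (p 0) ∧ ∀ n, p (n + 1) ∈ J (p n)

/-- `l` is well-founded in `J`: every infinite path in `J_l` is negative. -/
def WellFoundedIn (J : Lit σ D → Set (Lit σ D)) (l : Lit σ D) : Prop :=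
  ∀ p : ℕ → Lit σ D, IsInfPathFrom J l p → ∀ n, (p n).isNeg

/-- `J` justifies `L`: `J_L` is total for `L`, every literal of `L` is well-founded,
and the set of literals in `J_L` is consistent. -/
def Justifies (Δ : Defn σ D) (J : Lit σ D → Set (Lit σ D)) (L : Set (Lit σ D)) : Prop :=
  TotalFor Δ J L ∧ (∀ l ∈ L, WellFoundedIn J l) ∧ ConsistentSet (reachSet J L)

/-- The part of `J` on the nodes `N` is consistent with the literal-set structure `I`:
`I` is consistent and no literal of `N` in which `J` is defined is false in `I`. -/
def ConsistentWithOn (J : Lit σ D → Set (Lit σ D)) (N I : Set (Lit σ D)) : Prop :=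
  ConsistentSet I ∧ ∀ l ∈ N, J l ≠ ∅ → l.negate ∉ I

/-- The predicate symbols occurring in a definition. -/
def vocDef (Δ : Defn σ D) : Set σ.Pred :=
  { P | ∃ r ∈ Δ, r.head = P } ∪ { P | ∃ r ∈ Δ, ∃ d ∈ r.dom, P ∈ (r.body d).preds }

open Classical in
/-- Restriction of a structure to the symbols in `s` (everything else becomes unknown). -/
noncomputable def restrictP (s : Set σ.Pred) (I : Struct σ D) : Struct σ D :=
  fun a => if a.pred ∈ s then I a else TV.u

open Classical in
/-- Restriction of a structure to a set of atoms (everything else becomes unknown). -/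
noncomputable def restrictA (A : Set (Atom σ D)) (I : Struct σ D) : Struct σ D :=
  fun a => if a ∈ A then I a else TV.u

/-- Strong `s`-equivalence of two classes of models: each model of one, restricted to `s`,
expands in a unique way to a model of the other. -/
def StronglyEquivModels (s : Set σ.Pred) (M M' : Set (Struct σ D)) : Prop :=
  (∀ I ∈ M, ∃! I', I' ∈ M' ∧ ExpandsS (restrictP s I) I') ∧
  (∀ I' ∈ M', ∃! I, I ∈ M ∧ ExpandsS (restrictP s I') I)

/-- Strong `s`-equivalence of two definitions. -/
def StronglyEquivDef (s : Set σ.Pred) (Δ₁ Δ₂ : Defn σ D) : Prop :=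
  StronglyEquivModels s { I | IsModelOfDef I Δ₁ } { I | IsModelOfDef I Δ₂ }

/-- A (two-valued) structure expands a literal-set structure. -/
def expandsLit (Iin : Set (Lit σ D)) (M : Struct σ D) : Prop := ∀ l ∈ Iin, litTrue M l

/-- Strong `s`-equivalence of two definitions in the input structure `Iin`. -/
def StronglyEquivDefIn (s : Set σ.Pred) (Iin : Set (Lit σ D)) (Δ₁ Δ₂ : Defn σ D) : Prop :=
  StronglyEquivModels s { I | IsModelOfDef I Δ₁ ∧ expandsLit Iin I }
    { I | IsModelOfDef I Δ₂ ∧ expandsLit Iin I }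

/-- The domain atom of a 0-ary predicate symbol. -/
def ptAtom (σ : Voc) (D : Type) (Pt : σ.Pred) (h : σ.arity Pt = 0) : Atom σ D :=
  ⟨Pt, fun j => Fin.elim0 (h ▸ j)⟩

/-- An acceptable state `⟨Δg, Δd, J, I⟩` for the canonical theory `{P_t, Δ}` with input
structure `Iin`. -/
structure AcceptableState (Δ : Defn σ D) (Iin : Set (Lit σ D))
    (Δg Δd : Defn σ D) (J : Lit σ D → Set (Lit σ D)) (I : Set (Lit σ D)) : Prop where
  wf_gd : WellFormed (Δg ∪ Δd)
  wf_g : WellFormed Δg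
  wf_d : WellFormed Δd
  total_gd : IsTotalDef (Δg ∪ Δd)
  total_g : IsTotalDef Δg
  total_d : IsTotalDef Δd
  equiv : StronglyEquivDef (vocDef Δ) (Δg ∪ Δd) Δ
  disj : ∀ a, ¬ (definedAtom Δg a ∧ definedAtom Δd a)
  just : IsJustification (Δg ∪ Δd) J
  expands : Iin ⊆ I
  justified : Justifies (Δg ∪ Δd) J { l | l ∈ I ∧ definedLit Δd l }
  consistentWith : ConsistentWithOn J (reachSet J { l | l ∈ I ∧ definedLit Δd l }) I

/-- A default acceptable state. -/
structure DefaultAcceptableState (Δ : Defn σ D) (Iin : Set (Lit σ D))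
    (Δg Δd : Defn σ D) (J : Lit σ D → Set (Lit σ D)) (I : Set (Lit σ D))
    extends AcceptableState Δ Iin Δg Δd J I : Prop where
  dj_open_or_defd : ∀ l l', l' ∈ J l → openLit (Δg ∪ Δd) l' ∨ definedLit Δd l'
  justifies_defined : Justifies (Δg ∪ Δd) J { l | J l ≠ ∅ }

/-- A model of a theory (list of sentences plus a definition) relative to a vocabulary `s`:
two-valued on `s`, unknown outside `s`, satisfying all sentences and the definition. -/
def IsModelOfTOn (s : Set σ.Pred) (M : Struct σ D) (φs : List (Formula σ D))
    (Δ : Defn σ D) : Prop :=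
  (∀ a : Atom σ D, a.pred ∈ s → M a = TV.t ∨ M a = TV.f) ∧
  (∀ a : Atom σ D, a.pred ∉ s → M a = TV.u) ∧
  (∀ φ ∈ φs, φ.eval M = TV.t) ∧
  (∀ a : Atom σ D, a.pred ∈ s → M a = wfModel Δ M a)

/-- A model of a canonical theory `{pt, Δ}` relative to a vocabulary `s`. -/
def IsModelOfCanonOn (s : Set σ.Pred) (M : Struct σ D) (pt : Atom σ D)
    (Δ : Defn σ D) : Prop :=
  (∀ a : Atom σ D, a.pred ∈ s → M a = TV.t ∨ M a = TV.f) ∧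
  (∀ a : Atom σ D, a.pred ∉ s → M a = TV.u) ∧
  M pt = TV.t ∧
  (∀ a : Atom σ D, a.pred ∈ s → M a = wfModel Δ M a)

/-- A model of a definition relative to a vocabulary `s`: two-valued on `s`,
unknown outside `s`, and satisfying the well-founded-model equation on `s`. -/
def IsModelOfDefOn (s : Set σ.Pred) (I : Struct σ D) (Δ : Defn σ D) : Prop :=
  (∀ a : Atom σ D, a.pred ∈ s → I a = TV.t ∨ I a = TV.f) ∧
  (∀ a : Atom σ D, a.pred ∉ s → I a = TV.u) ∧
  (∀ a : Atom σ D, a.pred ∈ s → I a = wfModel Δ I a)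
/-! ### Auxiliary development for the reduction theorem -/

namespace TV

instance : Fintype TV := ⟨{t, f, u, i}, fun x => by cases x <;> decide⟩

instance (a b : TV) : Decidable (precLe a b) := by unfold precLe; infer_instance

/-- Lower bit of a truth value: `true` on `{t, i}`. -/
def lo : TV → Bool
  | t => true
  | i => true
  | _ => false

/-- Upper bit of a truth value: `true` on `{t, u}`. -/
def hi : TV → Bool
  | t => true
  | u => true
  | _ => false

theorem ext_lohi : ∀ {v w : TV}, lo v = lo w → hi v = hi w → v = w := by decide

theorem precLe_iff : ∀ a b : TV, precLe a b ↔
    ((lo a = true → lo b = true) ∧ (hi b = true → hi a = true)) := by decide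

theorem eq_t_iff : ∀ v : TV, v = t ↔ (lo v = true ∧ hi v = true) := by decide
theorem eq_i_iff : ∀ v : TV, v = i ↔ (lo v = true ∧ ¬ hi v = true) := by decide
theorem eq_u_iff : ∀ v : TV, v = u ↔ (¬ lo v = true ∧ hi v = true) := by decide
theorem eq_f_iff : ∀ v : TV, v = f ↔ (¬ lo v = true ∧ ¬ hi v = true) := by decide

theorem lo_iff : ∀ v : TV, (v = t ∨ v = i) ↔ lo v = true := by decide
theorem hi_iff : ∀ v : TV, (v = t ∨ v = u) ↔ hi v = true := by decide

theorem precLe_refl : ∀ v : TV, precLe v v := by decide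

theorem precLe_inv : ∀ a b : TV, precLe a b → precLe (inv a) (inv b) := by decide

theorem lo_mono {a b : TV} (h : precLe a b) : lo a = true → lo b = true :=
  ((precLe_iff a b).1 h).1

theorem hi_anti {a b : TV} (h : precLe a b) : hi b = true → hi a = true :=
  ((precLe_iff a b).1 h).2


theorem eq_of_two_of_precLe : ∀ a b : TV, (a = t ∨ a = f) → (b = t ∨ b = f) →
    precLe a b → b = a := by decide

theorem lo_sInf {S : Set TV} : lo (sInf S) = true ↔ ∀ v ∈ S, lo v = true := by
  unfold sInf
  split_ifs with h1 h2 h3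
  · constructor
    · intro h; exact absurd h (by decide)
    · intro H
      rcases h1 with hf | ⟨hu, _⟩
      · exact absurd (H _ hf) (by decide)
      · exact absurd (H _ hu) (by decide)
  · constructor
    · intro h; exact absurd h (by decide)
    · intro H; exact absurd (H _ h2) (by decide)
  · constructor
    · intro _ v hv
      cases v
      · rfl
      · exact absurd (Or.inl hv) h1
      · exact absurd hv h2
      · rfl
    · intro _; rfl
  · constructor
    · intro _ v hv
      cases v
      · rfl
      · exact absurd (Or.inl hv) h1
      · exact absurd hv h2
      · exact absurd hv h3
    · intro _; rfl

theorem hi_sInf {S : Set TV} : hi (sInf S) = true ↔ ∀ v ∈ S, hi v = true := by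
  unfold sInf
  split_ifs with h1 h2 h3
  · constructor
    · intro h; exact absurd h (by decide)
    · intro H
      rcases h1 with hf | ⟨_, hi'⟩
      · exact absurd (H _ hf) (by decide)
      · exact absurd (H _ hi') (by decide)
  · constructor
    · intro _ v hv
      cases v
      · rfl
      · exact absurd (Or.inl hv) h1
      · rfl
      · exact absurd (Or.inr ⟨h2, hv⟩) h1
    · intro _; rfl
  · constructor
    · intro h; exact absurd h (by decide)
    · intro H; exact absurd (H _ h3) (by decide)
  · constructor
    · intro _ v hv
      cases v
      · rfl
      · exact absurd (Or.inl hv) h1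
      · exact absurd hv h2
      · exact absurd hv h3
    · intro _; rfl

theorem lo_sSup {S : Set TV} : lo (sSup S) = true ↔ ∃ v ∈ S, lo v = true := by
  unfold sSup
  split_ifs with h1 h2 h3
  · constructor
    · intro _
      rcases h1 with ht | ⟨_, hi'⟩
      · exact ⟨t, ht, rfl⟩
      · exact ⟨i, hi', rfl⟩
    · intro _; rfl
  · constructor
    · intro h; exact absurd h (by decide)
    · rintro ⟨v, hv, hlov⟩
      cases v
      · exact absurd (Or.inl hv) h1
      · exact absurd hlov (by decide)
      · exact absurd hlov (by decide)
      · exact absurd (Or.inr ⟨h2, hv⟩) h1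
  · constructor
    · intro _; exact ⟨i, h3, rfl⟩
    · intro _; rfl
  · constructor
    · intro h; exact absurd h (by decide)
    · rintro ⟨v, hv, hlov⟩
      cases v
      · exact absurd (Or.inl hv) h1
      · exact absurd hlov (by decide)
      · exact absurd hv h2
      · exact absurd hv h3

theorem hi_sSup {S : Set TV} : hi (sSup S) = true ↔ ∃ v ∈ S, hi v = true := by
  unfold sSup
  split_ifs with h1 h2 h3
  · constructor
    · intro _
      rcases h1 with ht | ⟨hu, _⟩
      · exact ⟨t, ht, rfl⟩
      · exact ⟨u, hu, rfl⟩
    · intro _; rfl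
  · constructor
    · intro _; exact ⟨u, h2, rfl⟩
    · intro _; rfl
  · constructor
    · intro h; exact absurd h (by decide)
    · rintro ⟨v, hv, hiv⟩
      cases v
      · exact absurd (Or.inl hv) h1
      · exact absurd hiv (by decide)
      · exact absurd hv h2
      · exact absurd hiv (by decide)
  · constructor
    · intro h; exact absurd h (by decide)
    · rintro ⟨v, hv, hiv⟩
      cases v
      · exact absurd (Or.inl hv) h1
      · exact absurd hiv (by decide)
      · exact absurd hv h2
      · exact absurd hiv (by decide)

theorem lo_tmin {a b : TV} : lo (tmin a b) = true ↔ (lo a = true ∧ lo b = true) := by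
  unfold tmin
  rw [lo_sInf]
  constructor
  · intro H; exact ⟨H a (Set.mem_insert _ _), H b (Set.mem_insert_of_mem _ rfl)⟩
  · rintro ⟨ha, hb⟩ v hv
    rcases hv with rfl | hv
    · exact ha
    · rw [Set.mem_singleton_iff] at hv; subst hv; exact hb

theorem hi_tmin {a b : TV} : hi (tmin a b) = true ↔ (hi a = true ∧ hi b = true) := by
  unfold tmin
  rw [hi_sInf]
  constructor
  · intro H; exact ⟨H a (Set.mem_insert _ _), H b (Set.mem_insert_of_mem _ rfl)⟩
  · rintro ⟨ha, hb⟩ v hv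
    rcases hv with rfl | hv
    · exact ha
    · rw [Set.mem_singleton_iff] at hv; subst hv; exact hb

theorem lo_tmax {a b : TV} : lo (tmax a b) = true ↔ (lo a = true ∨ lo b = true) := by
  unfold tmax
  rw [lo_sSup]
  constructor
  · rintro ⟨v, hv, hlov⟩
    rcases hv with rfl | hv
    · exact Or.inl hlov
    · rw [Set.mem_singleton_iff] at hv; subst hv; exact Or.inr hlov
  · rintro (h | h)
    · exact ⟨a, Set.mem_insert _ _, h⟩
    · exact ⟨b, Set.mem_insert_of_mem _ rfl, h⟩

theorem hi_tmax {a b : TV} : hi (tmax a b) = true ↔ (hi a = true ∨ hi b = true) := by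
  unfold tmax
  rw [hi_sSup]
  constructor
  · rintro ⟨v, hv, hiv⟩
    rcases hv with rfl | hv
    · exact Or.inl hiv
    · rw [Set.mem_singleton_iff] at hv; subst hv; exact Or.inr hiv
  · rintro (h | h)
    · exact ⟨a, Set.mem_insert _ _, h⟩
    · exact ⟨b, Set.mem_insert_of_mem _ rfl, h⟩

theorem tmin_eq_t_iff {a b : TV} : tmin a b = t ↔ (a = t ∧ b = t) := by
  rw [eq_t_iff (tmin a b), lo_tmin, hi_tmin, eq_t_iff a, eq_t_iff b]
  tauto

theorem sSup_singleton {v : TV} : sSup {v} = v := by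
  cases v <;> simp [sSup, Set.mem_singleton_iff]

theorem sInf_empty : sInf (∅ : Set TV) = t := by
  simp [sInf]

end TV
/-! ### Monotonicity and congruence of formula evaluation -/

theorem eval_mono {I J : Struct σ D} (h : ExpandsS I J) :
    ∀ φ : Formula σ D, TV.precLe (φ.eval I) (φ.eval J) := by
  intro φ
  induction φ with
  | atom a => exact h a
  | not φ ih => exact TV.precLe_inv _ _ ih
  | and φ ψ ihφ ihψ =>
    simp only [Formula.eval]
    rw [TV.precLe_iff]
    constructor
    · intro hl
      rw [TV.lo_tmin] at hl ⊢
      exact ⟨TV.lo_mono ihφ hl.1, TV.lo_mono ihψ hl.2⟩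
    · intro hh
      rw [TV.hi_tmin] at hh ⊢
      exact ⟨TV.hi_anti ihφ hh.1, TV.hi_anti ihψ hh.2⟩
  | or φ ψ ihφ ihψ =>
    simp only [Formula.eval]
    rw [TV.precLe_iff]
    constructor
    · intro hl
      rw [TV.lo_tmax] at hl ⊢
      rcases hl with hl | hl
      · exact Or.inl (TV.lo_mono ihφ hl)
      · exact Or.inr (TV.lo_mono ihψ hl)
    · intro hh
      rw [TV.hi_tmax] at hh ⊢
      rcases hh with hh | hh
      · exact Or.inl (TV.hi_anti ihφ hh)
      · exact Or.inr (TV.hi_anti ihψ hh)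
  | all D' b ih =>
    simp only [Formula.eval]
    rw [TV.precLe_iff]
    constructor
    · intro hl
      rw [TV.lo_sInf] at hl ⊢
      rintro v ⟨d, hd, rfl⟩
      exact TV.lo_mono (ih d) (hl _ ⟨d, hd, rfl⟩)
    · intro hh
      rw [TV.hi_sInf] at hh ⊢
      rintro v ⟨d, hd, rfl⟩
      exact TV.hi_anti (ih d) (hh _ ⟨d, hd, rfl⟩)
  | ex D' b ih =>
    simp only [Formula.eval]
    rw [TV.precLe_iff]
    constructor
    · intro hl
      rw [TV.lo_sSup] at hl ⊢
      obtain ⟨v, ⟨d, hd, rfl⟩, hv⟩ := hl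
      exact ⟨_, ⟨d, hd, rfl⟩, TV.lo_mono (ih d) hv⟩
    · intro hh
      rw [TV.hi_sSup] at hh ⊢
      obtain ⟨v, ⟨d, hd, rfl⟩, hv⟩ := hh
      exact ⟨_, ⟨d, hd, rfl⟩, TV.hi_anti (ih d) hv⟩

theorem eval_congr {I J : Struct σ D} :
    ∀ φ : Formula σ D, (∀ a : Atom σ D, a.pred ∈ φ.preds → I a = J a) →
      φ.eval I = φ.eval J := by
  intro φ
  induction φ with
  | atom a => intro h; exact h a rfl
  | not φ ih => intro h; simp only [Formula.eval]; rw [ih h]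
  | and φ ψ ihφ ihψ =>
    intro h
    simp only [Formula.eval]
    rw [ihφ fun a ha => h a (Set.mem_union_left _ ha),
      ihψ fun a ha => h a (Set.mem_union_right _ ha)]
  | or φ ψ ihφ ihψ =>
    intro h
    simp only [Formula.eval]
    rw [ihφ fun a ha => h a (Set.mem_union_left _ ha),
      ihψ fun a ha => h a (Set.mem_union_right _ ha)]
  | all D' b ih =>
    intro h
    simp only [Formula.eval]
    congr 1
    ext v
    constructor
    · rintro ⟨d, hd, rfl⟩
      exact ⟨d, hd, (ih d fun a ha => h a (Set.mem_iUnion.2 ⟨d, ha⟩)).symm⟩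
    · rintro ⟨d, hd, rfl⟩
      exact ⟨d, hd, ih d fun a ha => h a (Set.mem_iUnion.2 ⟨d, ha⟩)⟩
  | ex D' b ih =>
    intro h
    simp only [Formula.eval]
    congr 1
    ext v
    constructor
    · rintro ⟨d, hd, rfl⟩
      exact ⟨d, hd, (ih d fun a ha => h a (Set.mem_iUnion.2 ⟨d, ha⟩)).symm⟩
    · rintro ⟨d, hd, rfl⟩
      exact ⟨d, hd, ih d fun a ha => h a (Set.mem_iUnion.2 ⟨d, ha⟩)⟩

/-! ### Generic facts about the immediate-consequence operators -/

theorem bodyVal_mono {I J : Struct σ D} (h : ExpandsS I J) (Δ₀ : Defn σ D) (a : Atom σ D) :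
    TV.precLe (bodyVal Δ₀ I a) (bodyVal Δ₀ J a) := by
  unfold bodyVal
  rw [TV.precLe_iff]
  constructor
  · intro hl
    rw [TV.lo_sSup] at hl ⊢
    obtain ⟨v, ⟨r, hr, d, hd, ha, rfl⟩, hv⟩ := hl
    exact ⟨_, ⟨r, hr, d, hd, ha, rfl⟩, TV.lo_mono (eval_mono h _) hv⟩
  · intro hh
    rw [TV.hi_sSup] at hh ⊢
    obtain ⟨v, ⟨r, hr, d, hd, ha, rfl⟩, hv⟩ := hh
    exact ⟨_, ⟨r, hr, d, hd, ha, rfl⟩, TV.hi_anti (eval_mono h _) hv⟩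

theorem combine_ext {Δ₁ Δ₂ : Defn σ D} {Io₁ Io₂ : Struct σ D}
    {x₁ y₁ x₂ y₂ : Set (Atom σ D)} {a : Atom σ D}
    (hd : definedAtom Δ₁ a ↔ definedAtom Δ₂ a)
    (hx : definedAtom Δ₁ a → (a ∈ x₁ ↔ a ∈ x₂))
    (hy : definedAtom Δ₁ a → (a ∈ y₁ ↔ a ∈ y₂))
    (hIo : ¬ definedAtom Δ₁ a → Io₁ a = Io₂ a) :
    combine Δ₁ Io₁ x₁ y₁ a = combine Δ₂ Io₂ x₂ y₂ a := by
  by_cases h : definedAtom Δ₁ a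
  · have h2 : definedAtom Δ₂ a := hd.1 h
    have hx' := hx h
    have hy' := hy h
    by_cases hax : a ∈ x₁
    · have hax2 : a ∈ x₂ := hx'.1 hax
      by_cases hay : a ∈ y₁
      · have hay2 : a ∈ y₂ := hy'.1 hay
        simp [combine, h, h2, hax, hax2, hay, hay2]
      · have hay2 : a ∉ y₂ := fun hh => hay (hy'.2 hh)
        simp [combine, h, h2, hax, hax2, hay, hay2]
    · have hax2 : a ∉ x₂ := fun hh => hax (hx'.2 hh)
      by_cases hay : a ∈ y₁
      · have hay2 : a ∈ y₂ := hy'.1 hay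
        simp [combine, h, h2, hax, hax2, hay, hay2]
      · have hay2 : a ∉ y₂ := fun hh => hay (hy'.2 hh)
        simp [combine, h, h2, hax, hax2, hay, hay2]
  · have h2 : ¬ definedAtom Δ₂ a := fun hh => h (hd.2 hh)
    simp [combine, h, h2, hIo h]

theorem combine_mono_x (Δ₀ : Defn σ D) (Io : Struct σ D) {x x' y : Set (Atom σ D)}
    (h : x ⊆ x') : ExpandsS (combine Δ₀ Io x y) (combine Δ₀ Io x' y) := by
  intro a
  by_cases hd : definedAtom Δ₀ a
  · by_cases hax : a ∈ x
    · have hax' : a ∈ x' := h hax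
      by_cases hay : a ∈ y <;> simp [combine, hd, hax, hax', hay, TV.precLe_refl]
    · by_cases hax' : a ∈ x' <;> by_cases hay : a ∈ y <;>
        simp [combine, hd, hax, hax', hay, TV.precLe_refl] <;> decide
  · simp [combine, hd, TV.precLe_refl]

theorem combine_anti_y (Δ₀ : Defn σ D) (Io : Struct σ D) {x y y' : Set (Atom σ D)}
    (h : y' ⊆ y) : ExpandsS (combine Δ₀ Io x y) (combine Δ₀ Io x y') := by
  intro a
  by_cases hd : definedAtom Δ₀ a
  · by_cases hay' : a ∈ y'
    · have hay : a ∈ y := h hay'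
      by_cases hax : a ∈ x <;> simp [combine, hd, hax, hay, hay', TV.precLe_refl]
    · by_cases hay : a ∈ y <;> by_cases hax : a ∈ x <;>
        simp [combine, hd, hax, hay, hay', TV.precLe_refl] <;> decide
  · simp [combine, hd, TV.precLe_refl]

theorem mem_lowerOp {Δ₀ : Defn σ D} {Io : Struct σ D} {x y : Set (Atom σ D)} {a : Atom σ D} :
    a ∈ lowerOp Δ₀ Io x y ↔
      (definedAtom Δ₀ a ∧ TV.lo (bodyVal Δ₀ (combine Δ₀ Io x y) a) = true) := by
  unfold lowerOp
  rw [Set.mem_setOf_eq]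
  constructor
  · rintro ⟨h1, h2⟩; exact ⟨h1, (TV.lo_iff _).1 h2⟩
  · rintro ⟨h1, h2⟩; exact ⟨h1, (TV.lo_iff _).2 h2⟩

theorem mem_upperOp {Δ₀ : Defn σ D} {Io : Struct σ D} {x y : Set (Atom σ D)} {a : Atom σ D} :
    a ∈ upperOp Δ₀ Io x y ↔
      (definedAtom Δ₀ a ∧ TV.hi (bodyVal Δ₀ (combine Δ₀ Io x y) a) = true) := by
  unfold upperOp
  rw [Set.mem_setOf_eq]
  constructor
  · rintro ⟨h1, h2⟩; exact ⟨h1, (TV.hi_iff _).1 h2⟩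
  · rintro ⟨h1, h2⟩; exact ⟨h1, (TV.hi_iff _).2 h2⟩

theorem lowerOp_mono_x {Δ₀ : Defn σ D} {Io : Struct σ D} {x x' y : Set (Atom σ D)}
    (h : x ⊆ x') : lowerOp Δ₀ Io x y ⊆ lowerOp Δ₀ Io x' y := by
  intro a ha
  rw [mem_lowerOp] at ha ⊢
  exact ⟨ha.1, TV.lo_mono (bodyVal_mono (combine_mono_x Δ₀ Io h) Δ₀ a) ha.2⟩

theorem lowerOp_anti_y {Δ₀ : Defn σ D} {Io : Struct σ D} {x y y' : Set (Atom σ D)}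
    (h : y' ⊆ y) : lowerOp Δ₀ Io x y ⊆ lowerOp Δ₀ Io x y' := by
  intro a ha
  rw [mem_lowerOp] at ha ⊢
  exact ⟨ha.1, TV.lo_mono (bodyVal_mono (combine_anti_y Δ₀ Io h) Δ₀ a) ha.2⟩

theorem upperOp_mono_y {Δ₀ : Defn σ D} {Io : Struct σ D} {x y y' : Set (Atom σ D)}
    (h : y' ⊆ y) : upperOp Δ₀ Io x y' ⊆ upperOp Δ₀ Io x y := by
  intro a ha
  rw [mem_upperOp] at ha ⊢
  exact ⟨ha.1, TV.hi_anti (bodyVal_mono (combine_anti_y Δ₀ Io h) Δ₀ a) ha.2⟩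

theorem upperOp_anti_x {Δ₀ : Defn σ D} {Io : Struct σ D} {x x' y : Set (Atom σ D)}
    (h : x ⊆ x') : upperOp Δ₀ Io x' y ⊆ upperOp Δ₀ Io x y := by
  intro a ha
  rw [mem_upperOp] at ha ⊢
  exact ⟨ha.1, TV.hi_anti (bodyVal_mono (combine_mono_x Δ₀ Io h) Δ₀ a) ha.2⟩

/-! ### The stable operators as least fixpoints -/

theorem sl_le {Δ₀ : Defn σ D} {Io : Struct σ D} {y x : Set (Atom σ D)}
    (h : lowerOp Δ₀ Io x y ⊆ x) : stableLower Δ₀ Io y ⊆ x :=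
  fun _ ha => Set.mem_sInter.1 ha x h

theorem sl_prefix {Δ₀ : Defn σ D} {Io : Struct σ D} {y : Set (Atom σ D)} :
    lowerOp Δ₀ Io (stableLower Δ₀ Io y) y ⊆ stableLower Δ₀ Io y := by
  intro a ha
  refine Set.mem_sInter.2 ?_
  intro x hx
  exact hx (lowerOp_mono_x (sl_le hx) ha)

theorem sl_post {Δ₀ : Defn σ D} {Io : Struct σ D} {y : Set (Atom σ D)} :
    stableLower Δ₀ Io y ⊆ lowerOp Δ₀ Io (stableLower Δ₀ Io y) y :=
  sl_le (lowerOp_mono_x sl_prefix)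

theorem sl_anti {Δ₀ : Defn σ D} {Io : Struct σ D} {y y' : Set (Atom σ D)}
    (h : y ⊆ y') : stableLower Δ₀ Io y' ⊆ stableLower Δ₀ Io y := by
  intro a ha
  refine Set.mem_sInter.2 ?_
  intro x hx
  exact Set.mem_sInter.1 ha x (fun b hb => hx (lowerOp_anti_y h hb))

theorem sl_defined {Δ₀ : Defn σ D} {Io : Struct σ D} {y : Set (Atom σ D)} :
    stableLower Δ₀ Io y ⊆ { a | definedAtom Δ₀ a } :=
  sl_le (fun _ ha => (mem_lowerOp.1 ha).1)

theorem su_le {Δ₀ : Defn σ D} {Io : Struct σ D} {x y : Set (Atom σ D)}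
    (h : upperOp Δ₀ Io x y ⊆ y) : stableUpper Δ₀ Io x ⊆ y :=
  fun _ ha => Set.mem_sInter.1 ha y h

theorem su_prefix {Δ₀ : Defn σ D} {Io : Struct σ D} {x : Set (Atom σ D)} :
    upperOp Δ₀ Io x (stableUpper Δ₀ Io x) ⊆ stableUpper Δ₀ Io x := by
  intro a ha
  refine Set.mem_sInter.2 ?_
  intro y hy
  exact hy (upperOp_mono_y (su_le hy) ha)

theorem su_post {Δ₀ : Defn σ D} {Io : Struct σ D} {x : Set (Atom σ D)} :
    stableUpper Δ₀ Io x ⊆ upperOp Δ₀ Io x (stableUpper Δ₀ Io x) :=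
  su_le (upperOp_mono_y su_prefix)

theorem su_anti {Δ₀ : Defn σ D} {Io : Struct σ D} {x x' : Set (Atom σ D)}
    (h : x ⊆ x') : stableUpper Δ₀ Io x' ⊆ stableUpper Δ₀ Io x := by
  intro a ha
  refine Set.mem_sInter.2 ?_
  intro y hy
  exact Set.mem_sInter.1 ha y (fun b hb => hy (upperOp_anti_x h hb))

theorem su_defined {Δ₀ : Defn σ D} {Io : Struct σ D} {x : Set (Atom σ D)} :
    stableUpper Δ₀ Io x ⊆ { a | definedAtom Δ₀ a } :=
  su_le (fun _ ha => (mem_upperOp.1 ha).1)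

/-! ### The well-founded fixpoint -/

theorem wfLower_le {Δ₀ : Defn σ D} {Io : Struct σ D} {p : Set (Atom σ D) × Set (Atom σ D)}
    (hp : p ∈ wfPrefixpoints Δ₀ Io) : wfLower Δ₀ Io ⊆ p.1 :=
  fun _ ha => Set.mem_sInter.1 ha p.1 ⟨p, hp, rfl⟩

theorem le_wfUpper {Δ₀ : Defn σ D} {Io : Struct σ D} {p : Set (Atom σ D) × Set (Atom σ D)}
    (hp : p ∈ wfPrefixpoints Δ₀ Io) : p.2 ⊆ wfUpper Δ₀ Io :=
  fun a ha => ⟨p.2, ⟨p, hp, rfl⟩, ha⟩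

theorem wf_mem {Δ₀ : Defn σ D} {Io : Struct σ D} :
    (wfLower Δ₀ Io, wfUpper Δ₀ Io) ∈ wfPrefixpoints Δ₀ Io := by
  constructor
  · intro a ha
    refine Set.mem_sInter.2 ?_
    rintro s ⟨p, hp, rfl⟩
    exact hp.1 (sl_anti (le_wfUpper hp) ha)
  · rintro a ⟨s, ⟨p, hp, rfl⟩, ha⟩
    exact su_anti (wfLower_le hp) (hp.2 ha)

theorem wf_fix_lower {Δ₀ : Defn σ D} {Io : Struct σ D} :
    wfLower Δ₀ Io = stableLower Δ₀ Io (wfUpper Δ₀ Io) := by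
  have hp : (stableLower Δ₀ Io (wfUpper Δ₀ Io), stableUpper Δ₀ Io (wfLower Δ₀ Io)) ∈
      wfPrefixpoints Δ₀ Io :=
    ⟨sl_anti (wf_mem (Δ₀ := Δ₀) (Io := Io)).2, su_anti (wf_mem (Δ₀ := Δ₀) (Io := Io)).1⟩
  exact Set.Subset.antisymm (wfLower_le hp) (wf_mem (Δ₀ := Δ₀) (Io := Io)).1

theorem wf_fix_upper {Δ₀ : Defn σ D} {Io : Struct σ D} :
    wfUpper Δ₀ Io = stableUpper Δ₀ Io (wfLower Δ₀ Io) := by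
  have hp : (stableLower Δ₀ Io (wfUpper Δ₀ Io), stableUpper Δ₀ Io (wfLower Δ₀ Io)) ∈
      wfPrefixpoints Δ₀ Io :=
    ⟨sl_anti (wf_mem (Δ₀ := Δ₀) (Io := Io)).2, su_anti (wf_mem (Δ₀ := Δ₀) (Io := Io)).1⟩
  exact Set.Subset.antisymm (wf_mem (Δ₀ := Δ₀) (Io := Io)).2 (le_wfUpper hp)
/-! ### Congruence of the operators -/

/-- Two structures agree outside the predicate `Pt`. -/
def agreeOff (Pt : σ.Pred) (I J : Struct σ D) : Prop :=
  ∀ a : Atom σ D, a.pred ≠ Pt → I a = J a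

/-- Two sets of atoms agree on the atoms defined by `Δ₀`. -/
def eqOnDef (Δ₀ : Defn σ D) (x x' : Set (Atom σ D)) : Prop :=
  ∀ a, definedAtom Δ₀ a → (a ∈ x ↔ a ∈ x')

theorem agreeOff_refl {Pt : σ.Pred} (I : Struct σ D) : agreeOff Pt I I := fun _ _ => rfl

theorem agreeOff_symm {Pt : σ.Pred} {I J : Struct σ D} (h : agreeOff Pt I J) :
    agreeOff Pt J I := fun a ha => (h a ha).symm

theorem eqOnDef_refl {Δ₀ : Defn σ D} (x : Set (Atom σ D)) : eqOnDef Δ₀ x x :=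
  fun _ _ => Iff.rfl

/-- The rule defining the fresh symbol. -/
def ptRuleOf (Pt : σ.Pred) (B : Formula σ D) : Rule σ D := ⟨Pt, Set.univ, fun _ => B⟩

theorem pt_atom_eq {Pt : σ.Pred} (hPt : σ.arity Pt = 0) :
    ∀ a : Atom σ D, a.pred = Pt → a = ptAtom σ D Pt hPt := by
  rintro ⟨p, args⟩ h
  dsimp at h
  subst h
  unfold ptAtom
  congr 1
  funext j
  exact absurd j.isLt (by omega)

theorem definedAtom_ne_pt {Pt : σ.Pred} (Δ : Defn σ D)
    (hheads : ∀ r ∈ Δ, r.head ≠ Pt) {a : Atom σ D}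
    (h : definedAtom Δ a) : a.pred ≠ Pt := by
  obtain ⟨r, hr, d, hd, rfl⟩ := h
  exact hheads r hr

theorem definedAtom_union_iff {Pt : σ.Pred} (Δ : Defn σ D) (B : Formula σ D)
    {a : Atom σ D} :
    definedAtom (Δ ∪ {ptRuleOf Pt B}) a ↔ (definedAtom Δ a ∨ a.pred = Pt) := by
  constructor
  · rintro ⟨r, hr, hdef⟩
    rcases hr with hr | hr
    · exact Or.inl ⟨r, hr, hdef⟩
    · rw [Set.mem_singleton_iff] at hr
      subst hr
      obtain ⟨d, _, rfl⟩ := hdef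
      exact Or.inr rfl
  · rintro (⟨r, hr, hdef⟩ | hp)
    · exact ⟨r, Set.mem_union_left _ hr, hdef⟩
    · refine ⟨ptRuleOf Pt B, Set.mem_union_right _ rfl, ?_⟩
      obtain ⟨p, args⟩ := a
      dsimp at hp
      subst hp
      exact ⟨args, Set.mem_univ _, rfl⟩

theorem combine_pt_agree {Pt : σ.Pred} (Δ : Defn σ D) (B : Formula σ D)
    (Io : Struct σ D) (x y : Set (Atom σ D)) :
    agreeOff Pt (combine (Δ ∪ {ptRuleOf Pt B}) Io x y) (combine Δ Io x y) := by
  intro a ha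
  refine combine_ext ?_ (fun _ => Iff.rfl) (fun _ => Iff.rfl) (fun _ => rfl)
  rw [definedAtom_union_iff Δ B]
  exact or_iff_left ha

theorem bodyVal_congr {Pt : σ.Pred} (Δ : Defn σ D)
    (hbodies : ∀ r ∈ Δ, ∀ d ∈ r.dom, Pt ∉ (r.body d).preds)
    {I J : Struct σ D} (h : agreeOff Pt I J) (a : Atom σ D) :
    bodyVal Δ I a = bodyVal Δ J a := by
  unfold bodyVal
  congr 1
  ext v
  constructor
  · rintro ⟨r, hr, d, hd, ha, rfl⟩
    refine ⟨r, hr, d, hd, ha, ?_⟩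
    exact (eval_congr _ fun b hb => h b (fun hbp => hbodies r hr d hd (hbp ▸ hb))).symm
  · rintro ⟨r, hr, d, hd, ha, rfl⟩
    refine ⟨r, hr, d, hd, ha, ?_⟩
    exact eval_congr _ fun b hb => h b (fun hbp => hbodies r hr d hd (hbp ▸ hb))

theorem combine_congr {Pt : σ.Pred} (Δ : Defn σ D) {Io Io' : Struct σ D}
    {x x' y y' : Set (Atom σ D)}
    (hIo : agreeOff Pt Io Io') (hx : eqOnDef Δ x x') (hy : eqOnDef Δ y y') :
    agreeOff Pt (combine Δ Io x y) (combine Δ Io' x' y') := by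
  intro a ha
  exact combine_ext Iff.rfl (fun hd => hx a hd) (fun hd => hy a hd) (fun _ => hIo a ha)

theorem lowerOp_congr {Pt : σ.Pred} (Δ : Defn σ D)
    (hbodies : ∀ r ∈ Δ, ∀ d ∈ r.dom, Pt ∉ (r.body d).preds)
    {Io Io' : Struct σ D} {x x' y y' : Set (Atom σ D)}
    (hIo : agreeOff Pt Io Io') (hx : eqOnDef Δ x x') (hy : eqOnDef Δ y y') :
    lowerOp Δ Io x y = lowerOp Δ Io' x' y' := by
  ext a
  rw [mem_lowerOp, mem_lowerOp,
    bodyVal_congr Δ hbodies (combine_congr Δ hIo hx hy) a]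

theorem upperOp_congr {Pt : σ.Pred} (Δ : Defn σ D)
    (hbodies : ∀ r ∈ Δ, ∀ d ∈ r.dom, Pt ∉ (r.body d).preds)
    {Io Io' : Struct σ D} {x x' y y' : Set (Atom σ D)}
    (hIo : agreeOff Pt Io Io') (hx : eqOnDef Δ x x') (hy : eqOnDef Δ y y') :
    upperOp Δ Io x y = upperOp Δ Io' x' y' := by
  ext a
  rw [mem_upperOp, mem_upperOp,
    bodyVal_congr Δ hbodies (combine_congr Δ hIo hx hy) a]

theorem sl_congr {Pt : σ.Pred} (Δ : Defn σ D)
    (hbodies : ∀ r ∈ Δ, ∀ d ∈ r.dom, Pt ∉ (r.body d).preds)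
    {Io Io' : Struct σ D} {y y' : Set (Atom σ D)}
    (hIo : agreeOff Pt Io Io') (hy : eqOnDef Δ y y') :
    stableLower Δ Io y = stableLower Δ Io' y' := by
  unfold stableLower
  have hs : {x | lowerOp Δ Io x y ⊆ x} = {x | lowerOp Δ Io' x y' ⊆ x} := by
    ext x
    rw [Set.mem_setOf_eq, Set.mem_setOf_eq,
      lowerOp_congr Δ hbodies hIo (eqOnDef_refl x) hy]
  rw [hs]

theorem su_congr {Pt : σ.Pred} (Δ : Defn σ D)
    (hbodies : ∀ r ∈ Δ, ∀ d ∈ r.dom, Pt ∉ (r.body d).preds)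
    {Io Io' : Struct σ D} {x x' : Set (Atom σ D)}
    (hIo : agreeOff Pt Io Io') (hx : eqOnDef Δ x x') :
    stableUpper Δ Io x = stableUpper Δ Io' x' := by
  unfold stableUpper
  have hs : {y | upperOp Δ Io x y ⊆ y} = {y | upperOp Δ Io' x' y ⊆ y} := by
    ext y
    rw [Set.mem_setOf_eq, Set.mem_setOf_eq,
      upperOp_congr Δ hbodies hIo hx (eqOnDef_refl y)]
  rw [hs]

theorem wfPrefixpoints_congr {Pt : σ.Pred} (Δ : Defn σ D)
    (hbodies : ∀ r ∈ Δ, ∀ d ∈ r.dom, Pt ∉ (r.body d).preds)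
    {Io Io' : Struct σ D} (hIo : agreeOff Pt Io Io') :
    wfPrefixpoints Δ Io = wfPrefixpoints Δ Io' := by
  ext p
  unfold wfPrefixpoints
  rw [Set.mem_setOf_eq, Set.mem_setOf_eq,
    sl_congr Δ hbodies hIo (eqOnDef_refl p.2), su_congr Δ hbodies hIo (eqOnDef_refl p.1)]

theorem wfLower_congr {Pt : σ.Pred} (Δ : Defn σ D)
    (hbodies : ∀ r ∈ Δ, ∀ d ∈ r.dom, Pt ∉ (r.body d).preds)
    {Io Io' : Struct σ D} (hIo : agreeOff Pt Io Io') :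
    wfLower Δ Io = wfLower Δ Io' := by
  unfold wfLower
  rw [wfPrefixpoints_congr Δ hbodies hIo]

theorem wfUpper_congr {Pt : σ.Pred} (Δ : Defn σ D)
    (hbodies : ∀ r ∈ Δ, ∀ d ∈ r.dom, Pt ∉ (r.body d).preds)
    {Io Io' : Struct σ D} (hIo : agreeOff Pt Io Io') :
    wfUpper Δ Io = wfUpper Δ Io' := by
  unfold wfUpper
  rw [wfPrefixpoints_congr Δ hbodies hIo]

theorem wfModel_congr {Pt : σ.Pred} (Δ : Defn σ D)
    (hbodies : ∀ r ∈ Δ, ∀ d ∈ r.dom, Pt ∉ (r.body d).preds)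
    {Io Io' : Struct σ D} (hIo : agreeOff Pt Io Io') :
    agreeOff Pt (wfModel Δ Io) (wfModel Δ Io') := by
  intro a ha
  unfold wfModel
  rw [wfLower_congr Δ hbodies hIo, wfUpper_congr Δ hbodies hIo]
  exact combine_congr Δ hIo (eqOnDef_refl _) (eqOnDef_refl _) a ha
theorem bodyVal_union_nonpt {Pt : σ.Pred} (Δ : Defn σ D) (B : Formula σ D)
    {I : Struct σ D} {a : Atom σ D} (ha : a.pred ≠ Pt) :
    bodyVal (Δ ∪ {ptRuleOf Pt B}) I a = bodyVal Δ I a := by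
  unfold bodyVal
  congr 1
  ext v
  constructor
  · rintro ⟨r, hr, d, hd, hda, hv⟩
    rcases hr with hr | hr
    · exact ⟨r, hr, d, hd, hda, hv⟩
    · rw [Set.mem_singleton_iff] at hr
      subst hr
      exact absurd (congrArg Atom.pred hda) ha
  · rintro ⟨r, hr, d, hd, hda, hv⟩
    exact ⟨r, Set.mem_union_left _ hr, d, hd, hda, hv⟩

theorem bodyVal_union_pt {Pt : σ.Pred} (hPt : σ.arity Pt = 0) (Δ : Defn σ D)
    (B : Formula σ D) (hheads : ∀ r ∈ Δ, r.head ≠ Pt) (I : Struct σ D) :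
    bodyVal (Δ ∪ {ptRuleOf Pt B}) I (ptAtom σ D Pt hPt) = B.eval I := by
  have hset : { v | ∃ r ∈ Δ ∪ {ptRuleOf Pt B}, ∃ d ∈ r.dom,
      ptAtom σ D Pt hPt = ⟨r.head, d⟩ ∧ (r.body d).eval I = v } = {B.eval I} := by
    ext v
    simp only [Set.mem_setOf_eq, Set.mem_singleton_iff]
    constructor
    · rintro ⟨r, hr, d, hd, hda, rfl⟩
      rcases hr with hr | hr
      · exact absurd (congrArg Atom.pred hda).symm (hheads r hr)
      · rw [Set.mem_singleton_iff] at hr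
        subst hr
        rfl
    · rintro rfl
      exact ⟨ptRuleOf Pt B, Set.mem_union_right _ rfl,
        (ptAtom σ D Pt hPt).args, Set.mem_univ _, rfl, rfl⟩
  unfold bodyVal
  rw [hset, TV.sSup_singleton]

theorem mem_lowerOp_union_nonpt {Pt : σ.Pred} (Δ : Defn σ D) (B : Formula σ D)
    (hbodies : ∀ r ∈ Δ, ∀ d ∈ r.dom, Pt ∉ (r.body d).preds)
    {Io : Struct σ D} {x y : Set (Atom σ D)} {a : Atom σ D} (ha : a.pred ≠ Pt) :
    a ∈ lowerOp (Δ ∪ {ptRuleOf Pt B}) Io x y ↔ a ∈ lowerOp Δ Io x y := by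
  rw [mem_lowerOp, mem_lowerOp, definedAtom_union_iff Δ B, or_iff_left ha,
    bodyVal_union_nonpt Δ B ha,
    bodyVal_congr Δ hbodies (combine_pt_agree Δ B Io x y) a]

theorem mem_upperOp_union_nonpt {Pt : σ.Pred} (Δ : Defn σ D) (B : Formula σ D)
    (hbodies : ∀ r ∈ Δ, ∀ d ∈ r.dom, Pt ∉ (r.body d).preds)
    {Io : Struct σ D} {x y : Set (Atom σ D)} {a : Atom σ D} (ha : a.pred ≠ Pt) :
    a ∈ upperOp (Δ ∪ {ptRuleOf Pt B}) Io x y ↔ a ∈ upperOp Δ Io x y := by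
  rw [mem_upperOp, mem_upperOp, definedAtom_union_iff Δ B, or_iff_left ha,
    bodyVal_union_nonpt Δ B ha,
    bodyVal_congr Δ hbodies (combine_pt_agree Δ B Io x y) a]

theorem mem_lowerOp_union_pt {Pt : σ.Pred} (hPt : σ.arity Pt = 0) (Δ : Defn σ D)
    (B : Formula σ D) (hheads : ∀ r ∈ Δ, r.head ≠ Pt)
    (hB : ∀ I J : Struct σ D, agreeOff Pt I J → B.eval I = B.eval J)
    {Io : Struct σ D} {x y : Set (Atom σ D)} :
    ptAtom σ D Pt hPt ∈ lowerOp (Δ ∪ {ptRuleOf Pt B}) Io x y ↔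
      TV.lo (B.eval (combine Δ Io x y)) = true := by
  rw [mem_lowerOp, bodyVal_union_pt hPt Δ B hheads,
    hB _ _ (combine_pt_agree Δ B Io x y)]
  have hd : definedAtom (Δ ∪ {ptRuleOf Pt B}) (ptAtom σ D Pt hPt) :=
    (definedAtom_union_iff Δ B).2 (Or.inr rfl)
  exact and_iff_right hd

theorem mem_upperOp_union_pt {Pt : σ.Pred} (hPt : σ.arity Pt = 0) (Δ : Defn σ D)
    (B : Formula σ D) (hheads : ∀ r ∈ Δ, r.head ≠ Pt)
    (hB : ∀ I J : Struct σ D, agreeOff Pt I J → B.eval I = B.eval J)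
    {Io : Struct σ D} {x y : Set (Atom σ D)} :
    ptAtom σ D Pt hPt ∈ upperOp (Δ ∪ {ptRuleOf Pt B}) Io x y ↔
      TV.hi (B.eval (combine Δ Io x y)) = true := by
  rw [mem_upperOp, bodyVal_union_pt hPt Δ B hheads,
    hB _ _ (combine_pt_agree Δ B Io x y)]
  have hd : definedAtom (Δ ∪ {ptRuleOf Pt B}) (ptAtom σ D Pt hPt) :=
    (definedAtom_union_iff Δ B).2 (Or.inr rfl)
  exact and_iff_right hd

theorem sl_le_sl_union {Pt : σ.Pred} (Δ : Defn σ D) (B : Formula σ D)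
    (hheads : ∀ r ∈ Δ, r.head ≠ Pt)
    (hbodies : ∀ r ∈ Δ, ∀ d ∈ r.dom, Pt ∉ (r.body d).preds)
    {Io : Struct σ D} {y : Set (Atom σ D)} :
    stableLower Δ Io y ⊆ stableLower (Δ ∪ {ptRuleOf Pt B}) Io y := by
  refine sl_le (fun a ha => sl_prefix ?_)
  exact (mem_lowerOp_union_nonpt Δ B hbodies
    (definedAtom_ne_pt Δ hheads (mem_lowerOp.1 ha).1)).2 ha

theorem su_le_su_union {Pt : σ.Pred} (Δ : Defn σ D) (B : Formula σ D)
    (hheads : ∀ r ∈ Δ, r.head ≠ Pt)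
    (hbodies : ∀ r ∈ Δ, ∀ d ∈ r.dom, Pt ∉ (r.body d).preds)
    {Io : Struct σ D} {x : Set (Atom σ D)} :
    stableUpper Δ Io x ⊆ stableUpper (Δ ∪ {ptRuleOf Pt B}) Io x := by
  refine su_le (fun a ha => su_prefix ?_)
  exact (mem_upperOp_union_nonpt Δ B hbodies
    (definedAtom_ne_pt Δ hheads (mem_upperOp.1 ha).1)).2 ha

theorem eqOnDef_insert_pt {Pt : σ.Pred} (hPt : σ.arity Pt = 0) (Δ : Defn σ D)
    (hheads : ∀ r ∈ Δ, r.head ≠ Pt) (x : Set (Atom σ D)) :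
    eqOnDef Δ (x ∪ {ptAtom σ D Pt hPt}) x := by
  intro a hd
  constructor
  · rintro (h | h)
    · exact h
    · rw [Set.mem_singleton_iff] at h
      exact absurd (by rw [h]; rfl : a.pred = Pt) (definedAtom_ne_pt Δ hheads hd)
  · exact fun h => Or.inl h

theorem sl_union_subset {Pt : σ.Pred} (hPt : σ.arity Pt = 0) (Δ : Defn σ D)
    (B : Formula σ D) (hheads : ∀ r ∈ Δ, r.head ≠ Pt)
    (hbodies : ∀ r ∈ Δ, ∀ d ∈ r.dom, Pt ∉ (r.body d).preds)
    {Io : Struct σ D} {y : Set (Atom σ D)} :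
    stableLower (Δ ∪ {ptRuleOf Pt B}) Io y ⊆
      stableLower Δ Io y ∪ {ptAtom σ D Pt hPt} := by
  refine sl_le ?_
  intro a ha
  by_cases hp : a.pred = Pt
  · exact Or.inr (pt_atom_eq hPt a hp)
  · have h1 : a ∈ lowerOp Δ Io (stableLower Δ Io y ∪ {ptAtom σ D Pt hPt}) y :=
      (mem_lowerOp_union_nonpt Δ B hbodies hp).1 ha
    rw [lowerOp_congr Δ hbodies (agreeOff_refl Io)
      (eqOnDef_insert_pt hPt Δ hheads _) (eqOnDef_refl y)] at h1
    exact Or.inl (sl_prefix h1)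

theorem su_union_subset {Pt : σ.Pred} (hPt : σ.arity Pt = 0) (Δ : Defn σ D)
    (B : Formula σ D) (hheads : ∀ r ∈ Δ, r.head ≠ Pt)
    (hbodies : ∀ r ∈ Δ, ∀ d ∈ r.dom, Pt ∉ (r.body d).preds)
    {Io : Struct σ D} {x : Set (Atom σ D)} :
    stableUpper (Δ ∪ {ptRuleOf Pt B}) Io x ⊆
      stableUpper Δ Io x ∪ {ptAtom σ D Pt hPt} := by
  refine su_le ?_
  intro a ha
  by_cases hp : a.pred = Pt
  · exact Or.inr (pt_atom_eq hPt a hp)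
  · have h1 : a ∈ upperOp Δ Io x (stableUpper Δ Io x ∪ {ptAtom σ D Pt hPt}) :=
      (mem_upperOp_union_nonpt Δ B hbodies hp).1 ha
    rw [upperOp_congr Δ hbodies (agreeOff_refl Io) (eqOnDef_refl x)
      (eqOnDef_insert_pt hPt Δ hheads _)] at h1
    exact Or.inl (su_prefix h1)

theorem eqOnDef_sl_union {Pt : σ.Pred} (hPt : σ.arity Pt = 0) (Δ : Defn σ D)
    (B : Formula σ D) (hheads : ∀ r ∈ Δ, r.head ≠ Pt)
    (hbodies : ∀ r ∈ Δ, ∀ d ∈ r.dom, Pt ∉ (r.body d).preds)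
    {Io : Struct σ D} {y : Set (Atom σ D)} :
    eqOnDef Δ (stableLower (Δ ∪ {ptRuleOf Pt B}) Io y) (stableLower Δ Io y) := by
  intro a hd
  constructor
  · intro h
    rcases sl_union_subset hPt Δ B hheads hbodies h with h | h
    · exact h
    · rw [Set.mem_singleton_iff] at h
      exact absurd (by rw [h]; rfl : a.pred = Pt) (definedAtom_ne_pt Δ hheads hd)
  · exact fun h => sl_le_sl_union Δ B hheads hbodies h

theorem eqOnDef_su_union {Pt : σ.Pred} (hPt : σ.arity Pt = 0) (Δ : Defn σ D)
    (B : Formula σ D) (hheads : ∀ r ∈ Δ, r.head ≠ Pt)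
    (hbodies : ∀ r ∈ Δ, ∀ d ∈ r.dom, Pt ∉ (r.body d).preds)
    {Io : Struct σ D} {x : Set (Atom σ D)} :
    eqOnDef Δ (stableUpper (Δ ∪ {ptRuleOf Pt B}) Io x) (stableUpper Δ Io x) := by
  intro a hd
  constructor
  · intro h
    rcases su_union_subset hPt Δ B hheads hbodies h with h | h
    · exact h
    · rw [Set.mem_singleton_iff] at h
      exact absurd (by rw [h]; rfl : a.pred = Pt) (definedAtom_ne_pt Δ hheads hd)
  · exact fun h => su_le_su_union Δ B hheads hbodies h

theorem pt_mem_sl_union {Pt : σ.Pred} (hPt : σ.arity Pt = 0) (Δ : Defn σ D)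
    (B : Formula σ D) (hheads : ∀ r ∈ Δ, r.head ≠ Pt)
    (hbodies : ∀ r ∈ Δ, ∀ d ∈ r.dom, Pt ∉ (r.body d).preds)
    (hB : ∀ I J : Struct σ D, agreeOff Pt I J → B.eval I = B.eval J)
    {Io : Struct σ D} {y : Set (Atom σ D)} :
    ptAtom σ D Pt hPt ∈ stableLower (Δ ∪ {ptRuleOf Pt B}) Io y ↔
      TV.lo (B.eval (combine Δ Io (stableLower Δ Io y) y)) = true := by
  have hagree : B.eval (combine Δ Io (stableLower (Δ ∪ {ptRuleOf Pt B}) Io y) y) =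
      B.eval (combine Δ Io (stableLower Δ Io y) y) :=
    hB _ _ (combine_congr Δ (agreeOff_refl Io)
      (eqOnDef_sl_union hPt Δ B hheads hbodies) (eqOnDef_refl y))
  constructor
  · intro h
    have h2 := (mem_lowerOp_union_pt hPt Δ B hheads hB).1 (sl_post h)
    rwa [hagree] at h2
  · intro h
    refine sl_prefix ((mem_lowerOp_union_pt hPt Δ B hheads hB).2 ?_)
    rwa [hagree]

theorem pt_mem_su_union {Pt : σ.Pred} (hPt : σ.arity Pt = 0) (Δ : Defn σ D)
    (B : Formula σ D) (hheads : ∀ r ∈ Δ, r.head ≠ Pt)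
    (hbodies : ∀ r ∈ Δ, ∀ d ∈ r.dom, Pt ∉ (r.body d).preds)
    (hB : ∀ I J : Struct σ D, agreeOff Pt I J → B.eval I = B.eval J)
    {Io : Struct σ D} {x : Set (Atom σ D)} :
    ptAtom σ D Pt hPt ∈ stableUpper (Δ ∪ {ptRuleOf Pt B}) Io x ↔
      TV.hi (B.eval (combine Δ Io x (stableUpper Δ Io x))) = true := by
  have hagree : B.eval (combine Δ Io x (stableUpper (Δ ∪ {ptRuleOf Pt B}) Io x)) =
      B.eval (combine Δ Io x (stableUpper Δ Io x)) :=
    hB _ _ (combine_congr Δ (agreeOff_refl Io) (eqOnDef_refl x)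
      (eqOnDef_su_union hPt Δ B hheads hbodies))
  constructor
  · intro h
    have h2 := (mem_upperOp_union_pt hPt Δ B hheads hB).1 (su_post h)
    rwa [hagree] at h2
  · intro h
    refine su_prefix ((mem_upperOp_union_pt hPt Δ B hheads hB).2 ?_)
    rwa [hagree]
/-- Stripping the `Pt` atoms from the second component of a `Δ'`-prefixpoint
yields a `Δ`-prefixpoint. -/
theorem wfPre_strip {Pt : σ.Pred} (hPt : σ.arity Pt = 0) (Δ : Defn σ D)
    (B : Formula σ D) (hheads : ∀ r ∈ Δ, r.head ≠ Pt)
    (hbodies : ∀ r ∈ Δ, ∀ d ∈ r.dom, Pt ∉ (r.body d).preds)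
    {Io : Struct σ D} {p : Set (Atom σ D) × Set (Atom σ D)}
    (hp : p ∈ wfPrefixpoints (Δ ∪ {ptRuleOf Pt B}) Io) :
    (p.1, {a ∈ p.2 | a.pred ≠ Pt}) ∈ wfPrefixpoints Δ Io := by
  constructor
  · intro a ha
    refine hp.1 (sl_le_sl_union Δ B hheads hbodies ?_)
    have heq : eqOnDef Δ ({a ∈ p.2 | a.pred ≠ Pt}) p.2 := by
      intro b hb
      have hbp := definedAtom_ne_pt Δ hheads hb
      exact ⟨fun h => h.1, fun h => ⟨h, hbp⟩⟩
    rwa [sl_congr Δ hbodies (agreeOff_refl Io) heq] at ha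
  · rintro a ⟨ha, hap⟩
    rcases su_union_subset hPt Δ B hheads hbodies (hp.2 ha) with h | h
    · exact h
    · rw [Set.mem_singleton_iff] at h
      exact absurd (by rw [h]; rfl : a.pred = Pt) hap

/-- Adding the `Pt` atom to the first component of a `Δ`-prefixpoint
yields a `Δ'`-prefixpoint. -/
theorem wfPre_extend {Pt : σ.Pred} (hPt : σ.arity Pt = 0) (Δ : Defn σ D)
    (B : Formula σ D) (hheads : ∀ r ∈ Δ, r.head ≠ Pt)
    (hbodies : ∀ r ∈ Δ, ∀ d ∈ r.dom, Pt ∉ (r.body d).preds)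
    {Io : Struct σ D} {p : Set (Atom σ D) × Set (Atom σ D)}
    (hp : p ∈ wfPrefixpoints Δ Io) :
    (p.1 ∪ {ptAtom σ D Pt hPt}, p.2) ∈ wfPrefixpoints (Δ ∪ {ptRuleOf Pt B}) Io := by
  constructor
  · intro a ha
    rcases sl_union_subset hPt Δ B hheads hbodies ha with h | h
    · exact Or.inl (hp.1 h)
    · exact Or.inr h
  · intro a ha
    refine su_le_su_union Δ B hheads hbodies ?_
    rw [su_congr Δ hbodies (agreeOff_refl Io)
      (eqOnDef_insert_pt hPt Δ hheads p.1)]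
    exact hp.2 ha

theorem wf_union_lower_nonpt {Pt : σ.Pred} (hPt : σ.arity Pt = 0) (Δ : Defn σ D)
    (B : Formula σ D) (hheads : ∀ r ∈ Δ, r.head ≠ Pt)
    (hbodies : ∀ r ∈ Δ, ∀ d ∈ r.dom, Pt ∉ (r.body d).preds)
    {Io : Struct σ D} {a : Atom σ D} (ha : a.pred ≠ Pt) :
    a ∈ wfLower (Δ ∪ {ptRuleOf Pt B}) Io ↔ a ∈ wfLower Δ Io := by
  constructor
  · intro h
    refine Set.mem_sInter.2 ?_
    rintro s ⟨p, hp, rfl⟩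
    rcases wfLower_le (wfPre_extend hPt Δ B hheads hbodies hp) h with h2 | h2
    · exact h2
    · rw [Set.mem_singleton_iff] at h2
      exact absurd (by rw [h2]; rfl : a.pred = Pt) ha
  · intro h
    refine Set.mem_sInter.2 ?_
    rintro s ⟨p, hp, rfl⟩
    exact wfLower_le (wfPre_strip hPt Δ B hheads hbodies hp) h

theorem wf_union_upper_nonpt {Pt : σ.Pred} (hPt : σ.arity Pt = 0) (Δ : Defn σ D)
    (B : Formula σ D) (hheads : ∀ r ∈ Δ, r.head ≠ Pt)
    (hbodies : ∀ r ∈ Δ, ∀ d ∈ r.dom, Pt ∉ (r.body d).preds)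
    {Io : Struct σ D} {a : Atom σ D} (ha : a.pred ≠ Pt) :
    a ∈ wfUpper (Δ ∪ {ptRuleOf Pt B}) Io ↔ a ∈ wfUpper Δ Io := by
  constructor
  · rintro ⟨s, ⟨p, hp, rfl⟩, h⟩
    exact le_wfUpper (wfPre_strip hPt Δ B hheads hbodies hp) ⟨h, ha⟩
  · rintro ⟨s, ⟨p, hp, rfl⟩, h⟩
    exact le_wfUpper (wfPre_extend hPt Δ B hheads hbodies hp) h

theorem eqOnDef_wf_lower {Pt : σ.Pred} (hPt : σ.arity Pt = 0) (Δ : Defn σ D)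
    (B : Formula σ D) (hheads : ∀ r ∈ Δ, r.head ≠ Pt)
    (hbodies : ∀ r ∈ Δ, ∀ d ∈ r.dom, Pt ∉ (r.body d).preds) {Io : Struct σ D} :
    eqOnDef Δ (wfLower (Δ ∪ {ptRuleOf Pt B}) Io) (wfLower Δ Io) :=
  fun _ hd => wf_union_lower_nonpt hPt Δ B hheads hbodies
    (definedAtom_ne_pt Δ hheads hd)

theorem eqOnDef_wf_upper {Pt : σ.Pred} (hPt : σ.arity Pt = 0) (Δ : Defn σ D)
    (B : Formula σ D) (hheads : ∀ r ∈ Δ, r.head ≠ Pt)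
    (hbodies : ∀ r ∈ Δ, ∀ d ∈ r.dom, Pt ∉ (r.body d).preds) {Io : Struct σ D} :
    eqOnDef Δ (wfUpper (Δ ∪ {ptRuleOf Pt B}) Io) (wfUpper Δ Io) :=
  fun _ hd => wf_union_upper_nonpt hPt Δ B hheads hbodies
    (definedAtom_ne_pt Δ hheads hd)

theorem pt_mem_wf_lower {Pt : σ.Pred} (hPt : σ.arity Pt = 0) (Δ : Defn σ D)
    (B : Formula σ D) (hheads : ∀ r ∈ Δ, r.head ≠ Pt)
    (hbodies : ∀ r ∈ Δ, ∀ d ∈ r.dom, Pt ∉ (r.body d).preds)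
    (hB : ∀ I J : Struct σ D, agreeOff Pt I J → B.eval I = B.eval J)
    {Io : Struct σ D} :
    ptAtom σ D Pt hPt ∈ wfLower (Δ ∪ {ptRuleOf Pt B}) Io ↔
      TV.lo (B.eval (wfModel Δ Io)) = true := by
  rw [wf_fix_lower (Δ₀ := Δ ∪ {ptRuleOf Pt B}) (Io := Io)]
  rw [pt_mem_sl_union hPt Δ B hheads hbodies hB]
  have h1 : stableLower Δ Io (wfUpper (Δ ∪ {ptRuleOf Pt B}) Io) = wfLower Δ Io := by
    rw [sl_congr Δ hbodies (agreeOff_refl Io) (eqOnDef_wf_upper hPt Δ B hheads hbodies),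
      ← wf_fix_lower]
  rw [h1]
  have h2 : B.eval (combine Δ Io (wfLower Δ Io) (wfUpper (Δ ∪ {ptRuleOf Pt B}) Io)) =
      B.eval (combine Δ Io (wfLower Δ Io) (wfUpper Δ Io)) :=
    hB _ _ (combine_congr Δ (agreeOff_refl Io) (eqOnDef_refl _)
      (eqOnDef_wf_upper hPt Δ B hheads hbodies))
  rw [h2]
  rfl

theorem pt_mem_wf_upper {Pt : σ.Pred} (hPt : σ.arity Pt = 0) (Δ : Defn σ D)
    (B : Formula σ D) (hheads : ∀ r ∈ Δ, r.head ≠ Pt)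
    (hbodies : ∀ r ∈ Δ, ∀ d ∈ r.dom, Pt ∉ (r.body d).preds)
    (hB : ∀ I J : Struct σ D, agreeOff Pt I J → B.eval I = B.eval J)
    {Io : Struct σ D} :
    ptAtom σ D Pt hPt ∈ wfUpper (Δ ∪ {ptRuleOf Pt B}) Io ↔
      TV.hi (B.eval (wfModel Δ Io)) = true := by
  rw [wf_fix_upper (Δ₀ := Δ ∪ {ptRuleOf Pt B}) (Io := Io)]
  rw [pt_mem_su_union hPt Δ B hheads hbodies hB]
  have h1 : stableUpper Δ Io (wfLower (Δ ∪ {ptRuleOf Pt B}) Io) = wfUpper Δ Io := by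
    rw [su_congr Δ hbodies (agreeOff_refl Io) (eqOnDef_wf_lower hPt Δ B hheads hbodies),
      ← wf_fix_upper]
  rw [h1]
  have h2 : B.eval (combine Δ Io (wfLower (Δ ∪ {ptRuleOf Pt B}) Io) (wfUpper Δ Io)) =
      B.eval (combine Δ Io (wfLower Δ Io) (wfUpper Δ Io)) :=
    hB _ _ (combine_congr Δ (agreeOff_refl Io)
      (eqOnDef_wf_lower hPt Δ B hheads hbodies) (eqOnDef_refl _))
  rw [h2]
  rfl

/-- MAIN, part 1: off `Pt`, the well-founded model of `Δ'` is that of `Δ`. -/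
theorem wfModel_union_nonpt {Pt : σ.Pred} (hPt : σ.arity Pt = 0) (Δ : Defn σ D)
    (B : Formula σ D) (hheads : ∀ r ∈ Δ, r.head ≠ Pt)
    (hbodies : ∀ r ∈ Δ, ∀ d ∈ r.dom, Pt ∉ (r.body d).preds)
    {Io : Struct σ D} {a : Atom σ D} (ha : a.pred ≠ Pt) :
    wfModel (Δ ∪ {ptRuleOf Pt B}) Io a = wfModel Δ Io a := by
  unfold wfModel
  refine combine_ext ?_ ?_ ?_ (fun _ => rfl)
  · rw [definedAtom_union_iff Δ B]
    exact or_iff_left ha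
  · intro _
    exact wf_union_lower_nonpt hPt Δ B hheads hbodies ha
  · intro _
    exact wf_union_upper_nonpt hPt Δ B hheads hbodies ha

/-- MAIN, part 2: the well-founded model of `Δ'` assigns to the `Pt` atom the value
of the body `B` in the well-founded model of `Δ`. -/
theorem wfModel_union_pt {Pt : σ.Pred} (hPt : σ.arity Pt = 0) (Δ : Defn σ D)
    (B : Formula σ D) (hheads : ∀ r ∈ Δ, r.head ≠ Pt)
    (hbodies : ∀ r ∈ Δ, ∀ d ∈ r.dom, Pt ∉ (r.body d).preds)
    (hB : ∀ I J : Struct σ D, agreeOff Pt I J → B.eval I = B.eval J)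
    {Io : Struct σ D} :
    wfModel (Δ ∪ {ptRuleOf Pt B}) Io (ptAtom σ D Pt hPt) = B.eval (wfModel Δ Io) := by
  have hd : definedAtom (Δ ∪ {ptRuleOf Pt B}) (ptAtom σ D Pt hPt) :=
    (definedAtom_union_iff Δ B).2 (Or.inr rfl)
  have hl := pt_mem_wf_lower hPt Δ B hheads hbodies hB (Io := Io)
  have hu := pt_mem_wf_upper hPt Δ B hheads hbodies hB (Io := Io)
  unfold wfModel
  by_cases h1 : TV.lo (B.eval (wfModel Δ Io)) = true <;>
    by_cases h2 : TV.hi (B.eval (wfModel Δ Io)) = true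
  · have m1 : ptAtom σ D Pt hPt ∈ wfLower (Δ ∪ {ptRuleOf Pt B}) Io := hl.2 h1
    have m2 : ptAtom σ D Pt hPt ∈ wfUpper (Δ ∪ {ptRuleOf Pt B}) Io := hu.2 h2
    simp only [combine, hd, m1, m2, if_true]
    exact ((TV.eq_t_iff _).2 ⟨h1, h2⟩).symm
  · have m1 : ptAtom σ D Pt hPt ∈ wfLower (Δ ∪ {ptRuleOf Pt B}) Io := hl.2 h1
    have m2 : ptAtom σ D Pt hPt ∉ wfUpper (Δ ∪ {ptRuleOf Pt B}) Io := fun h => h2 (hu.1 h)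
    simp only [combine, hd, m1, m2, if_true, if_false]
    exact ((TV.eq_i_iff _).2 ⟨h1, h2⟩).symm
  · have m1 : ptAtom σ D Pt hPt ∉ wfLower (Δ ∪ {ptRuleOf Pt B}) Io := fun h => h1 (hl.1 h)
    have m2 : ptAtom σ D Pt hPt ∈ wfUpper (Δ ∪ {ptRuleOf Pt B}) Io := hu.2 h2
    simp only [combine, hd, m1, m2, if_true, if_false]
    exact ((TV.eq_u_iff _).2 ⟨h1, h2⟩).symm
  · have m1 : ptAtom σ D Pt hPt ∉ wfLower (Δ ∪ {ptRuleOf Pt B}) Io := fun h => h1 (hl.1 h)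
    have m2 : ptAtom σ D Pt hPt ∉ wfUpper (Δ ∪ {ptRuleOf Pt B}) Io := fun h => h2 (hu.1 h)
    simp only [combine, hd, m1, m2, if_false]
    exact ((TV.eq_f_iff _).2 ⟨h1, h2⟩).symm

/-! ### The conjunction of the sentences -/

theorem base_eval_t (f : D → Formula σ D) (I : Struct σ D) :
    (Formula.all (∅ : Set D) f).eval I = TV.t := by
  have h : { v | ∃ d ∈ (∅ : Set D), (f d).eval I = v } = (∅ : Set TV) := by
    ext v
    simp
  show TV.sInf { v | ∃ d ∈ (∅ : Set D), (f d).eval I = v } = TV.t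
  rw [h, TV.sInf_empty]

theorem conj_eval_t_iff (φs : List (Formula σ D)) (b0 : Formula σ D)
    (hb0 : ∀ I : Struct σ D, b0.eval I = TV.t) (I : Struct σ D) :
    (φs.foldr Formula.and b0).eval I = TV.t ↔ ∀ φ ∈ φs, φ.eval I = TV.t := by
  induction φs with
  | nil => simp [hb0]
  | cons φ rest ih =>
    simp only [List.foldr_cons, List.mem_cons]
    rw [show (Formula.and φ (rest.foldr Formula.and b0)).eval I =
      TV.tmin (φ.eval I) ((rest.foldr Formula.and b0).eval I) from rfl]
    rw [TV.tmin_eq_t_iff, ih]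
    constructor
    · rintro ⟨ha, hb⟩ ψ hψ
      rcases hψ with rfl | hψ
      · exact ha
      · exact hb ψ hψ
    · intro h
      exact ⟨h φ (Or.inl rfl), fun ψ hψ => h ψ (Or.inr hψ)⟩

theorem conj_congr {Pt : σ.Pred} (φs : List (Formula σ D))
    (hfresh₁ : ∀ φ ∈ φs, Pt ∉ φ.preds) (b0 : Formula σ D)
    (hb0 : ∀ I : Struct σ D, b0.eval I = TV.t)
    {I J : Struct σ D} (h : agreeOff Pt I J) :
    (φs.foldr Formula.and b0).eval I = (φs.foldr Formula.and b0).eval J := by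
  induction φs with
  | nil => rw [List.foldr_nil, hb0, hb0]
  | cons φ rest ih =>
    simp only [List.foldr_cons]
    show TV.tmin (φ.eval I) ((rest.foldr Formula.and b0).eval I) =
      TV.tmin (φ.eval J) ((rest.foldr Formula.and b0).eval J)
    rw [eval_congr φ (fun a ha => h a (fun hp => hfresh₁ φ List.mem_cons_self (hp ▸ ha))),
      ih (fun ψ hψ => hfresh₁ ψ (List.mem_cons_of_mem φ hψ))]

/-- Reduction to canonical form: a theory `{φ₁, …, φₙ, Δ}` is strongly
`voc(T)`-equivalent to the canonical theory `{P_t, Δ ∪ {P_t ← φ₁ ∧ … ∧ φₙ}}` where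
`P_t` is a fresh 0-ary symbol: every model of `T` expands uniquely to a model of the
canonical theory, and every model of the canonical theory restricted to `voc(T)` is a
model of `T`. -/
theorem reduction_to_canonical (σ : Voc) (D : Type) [Nonempty D]
    (φs : List (Formula σ D)) (Δ : Defn σ D) (hΔ : WellFormed Δ)
    (Pt : σ.Pred) (hPt : σ.arity Pt = 0)
    (hfresh₁ : ∀ φ ∈ φs, Pt ∉ φ.preds)
    (hfresh₂ : Pt ∉ vocDef Δ) :
    let vocT : Set σ.Pred := vocDef Δ ∪ { P | ∃ φ ∈ φs, P ∈ φ.preds }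
    let ptA : Atom σ D := ptAtom σ D Pt hPt
    let ptRule : Rule σ D :=
      ⟨Pt, Set.univ,
        fun _ => φs.foldr Formula.and (Formula.all ∅ (fun _ => Formula.atom ptA))⟩
    let Δ' : Defn σ D := Δ ∪ {ptRule}
    (∀ M : Struct σ D, IsModelOfTOn vocT M φs Δ →
        ∃! M' : Struct σ D, IsModelOfCanonOn (insert Pt vocT) M' ptA Δ' ∧
          ExpandsS M M') ∧
    (∀ M' : Struct σ D, IsModelOfCanonOn (insert Pt vocT) M' ptA Δ' →
        IsModelOfTOn vocT (restrictP vocT M') φs Δ) := by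
  intro vocT ptA ptRule Δ'
  classical
  have hvocT : vocT = vocDef Δ ∪ { P | ∃ φ ∈ φs, P ∈ φ.preds } := rfl
  have hheads : ∀ r ∈ Δ, r.head ≠ Pt :=
    fun r hr heq => hfresh₂ (Set.mem_union_left _ ⟨r, hr, heq⟩)
  have hbodies : ∀ r ∈ Δ, ∀ d ∈ r.dom, Pt ∉ (r.body d).preds :=
    fun r hr d hd hp => hfresh₂ (Set.mem_union_right _ ⟨r, hr, d, hd, hp⟩)
  set B : Formula σ D :=
    φs.foldr Formula.and (Formula.all (∅ : Set D) (fun _ => Formula.atom ptA)) with hBset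
  have hD' : Δ' = Δ ∪ {ptRuleOf Pt B} := rfl
  have hptA : ptA = ptAtom σ D Pt hPt := rfl
  have hb0 : ∀ I : Struct σ D,
      (Formula.all (∅ : Set D) (fun _ => Formula.atom ptA)).eval I = TV.t :=
    fun I => base_eval_t _ I
  have hB : ∀ I J : Struct σ D, agreeOff Pt I J → B.eval I = B.eval J :=
    fun I J h => conj_congr φs hfresh₁ _ hb0 h
  have hBt : ∀ I : Struct σ D, (B.eval I = TV.t ↔ ∀ φ ∈ φs, φ.eval I = TV.t) :=
    fun I => conj_eval_t_iff φs _ hb0 I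
  have hPtvocT : Pt ∉ vocT := by
    rw [hvocT]
    intro h
    rw [Set.mem_union] at h
    rcases h with h | h
    · exact hfresh₂ h
    · obtain ⟨φ, hφ, hp⟩ := h
      exact hfresh₁ φ hφ hp
  have hdef_voc : ∀ a : Atom σ D, definedAtom Δ a → a.pred ∈ vocT := by
    rintro a ⟨r, hr, d, hd, rfl⟩
    rw [hvocT]
    exact Set.mem_union_left _ (Set.mem_union_left _ ⟨r, hr, rfl⟩)
  rw [hD', hptA]
  constructor
  · -- every model of T expands uniquely to a model of the canonical theory
    intro M hM
    obtain ⟨hM1, hM2, hM3, hM4⟩ := hM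
    have hMwf : ∀ a : Atom σ D, wfModel Δ M a = M a := by
      intro a
      by_cases hd : definedAtom Δ a
      · exact (hM4 a (hdef_voc a hd)).symm
      · show combine Δ M (wfLower Δ M) (wfUpper Δ M) a = M a
        simp [combine, hd]
    set Mc : Struct σ D := fun a => if a.pred = Pt then TV.t else M a with hMc
    have hMca : ∀ a : Atom σ D, a.pred ≠ Pt → Mc a = M a := by
      intro a ha
      rw [hMc]
      exact if_neg ha
    have hMcp : ∀ a : Atom σ D, a.pred = Pt → Mc a = TV.t := by
      intro a ha
      rw [hMc]
      exact if_pos ha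
    have hagree : agreeOff Pt Mc M := fun a ha => hMca a ha
    have hwfMc : ∀ b : Atom σ D, b.pred ≠ Pt → wfModel Δ Mc b = M b :=
      fun b hb => (wfModel_congr Δ hbodies hagree b hb).trans (hMwf b)
    have hBMc : B.eval (wfModel Δ Mc) = TV.t := by
      rw [hB _ M (fun b hb => hwfMc b hb)]
      exact (hBt M).2 hM3
    refine ⟨Mc, ⟨⟨?_, ?_, ?_, ?_⟩, ?_⟩, ?_⟩
    · intro a ha
      by_cases hp : a.pred = Pt
      · exact Or.inl (hMcp a hp)
      · rcases Set.mem_insert_iff.1 ha with h | hv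
        · exact absurd h hp
        · rw [hMca a hp]
          exact hM1 a hv
    · intro a ha
      have hp : a.pred ≠ Pt := fun h => ha (by rw [h]; exact Set.mem_insert _ _)
      have hv : a.pred ∉ vocT := fun h => ha (Set.mem_insert_of_mem _ h)
      rw [hMca a hp]
      exact hM2 a hv
    · exact hMcp _ rfl
    · intro a ha
      by_cases hp : a.pred = Pt
      · have hq : a = ptAtom σ D Pt hPt := pt_atom_eq hPt a hp
        subst hq
        rw [hMcp _ rfl, wfModel_union_pt hPt Δ B hheads hbodies hB, hBMc]
      · rw [hMca a hp, wfModel_union_nonpt hPt Δ B hheads hbodies hp, hwfMc a hp]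
    · -- ExpandsS M Mc
      intro a
      by_cases hp : a.pred = Pt
      · rw [hM2 a (fun h => hPtvocT (hp ▸ h)), hMcp a hp]
        decide
      · rw [hMca a hp]
        exact TV.precLe_refl _
    · -- uniqueness
      rintro N ⟨⟨hN1, hN2, hN3, hN4⟩, hNexp⟩
      funext a
      by_cases hp : a.pred = Pt
      · have hq : a = ptAtom σ D Pt hPt := pt_atom_eq hPt a hp
        subst hq
        rw [hN3, hMcp _ rfl]
      · by_cases hv : a.pred ∈ vocT
        · rw [hMca a hp]
          exact TV.eq_of_two_of_precLe (M a) (N a) (hM1 a hv)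
            (hN1 a (Set.mem_insert_of_mem _ hv)) (hNexp a)
        · have hnv : a.pred ∉ insert Pt vocT := by
            intro h
            rcases Set.mem_insert_iff.1 h with h | h
            · exact hp h
            · exact hv h
          rw [hN2 a hnv, hMca a hp, hM2 a hv]
  · -- every model of the canonical theory restricts to a model of T
    intro M' hM'
    obtain ⟨h1, h2, h3, h4⟩ := hM'
    have hNM' : agreeOff Pt (restrictP vocT M') M' := by
      intro a ha
      by_cases hv : a.pred ∈ vocT
      · simp [restrictP, hv]
      · have hnv : a.pred ∉ insert Pt vocT := by
          intro h
          rcases Set.mem_insert_iff.1 h with h | h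
          · exact ha h
          · exact hv h
        rw [h2 a hnv]
        simp [restrictP, hv]
    have hdefM' : ∀ a : Atom σ D, definedAtom Δ a → wfModel Δ M' a = M' a := by
      intro a hd
      have hnp : a.pred ≠ Pt := definedAtom_ne_pt Δ hheads hd
      have hv : a.pred ∈ insert Pt vocT := Set.mem_insert_of_mem _ (hdef_voc a hd)
      calc wfModel Δ M' a
          = wfModel (Δ ∪ {ptRuleOf Pt B}) M' a :=
            (wfModel_union_nonpt hPt Δ B hheads hbodies hnp).symm
        _ = M' a := (h4 a hv).symm
    have hwfN : ∀ a : Atom σ D, a.pred ≠ Pt →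
        wfModel Δ M' a = restrictP vocT M' a := by
      intro a hnp
      by_cases hd : definedAtom Δ a
      · rw [hdefM' a hd]
        exact (hNM' a hnp).symm
      · have ho : wfModel Δ M' a = M' a := by
          show combine Δ M' (wfLower Δ M') (wfUpper Δ M') a = M' a
          simp [combine, hd]
        rw [ho]
        exact (hNM' a hnp).symm
    have hBM' : B.eval (wfModel Δ M') = TV.t := by
      have hvpt : (ptAtom σ D Pt hPt).pred ∈ insert Pt vocT := Set.mem_insert _ _
      calc B.eval (wfModel Δ M')
          = wfModel (Δ ∪ {ptRuleOf Pt B}) M' (ptAtom σ D Pt hPt) :=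
            (wfModel_union_pt hPt Δ B hheads hbodies hB).symm
        _ = TV.t := (h4 _ hvpt).symm.trans h3
    refine ⟨?_, ?_, ?_, ?_⟩
    · intro a hv
      have : restrictP vocT M' a = M' a := by simp [restrictP, hv]
      rw [this]
      exact h1 a (Set.mem_insert_of_mem _ hv)
    · intro a hv
      simp [restrictP, hv]
    · intro φ hφ
      have he : φ.eval (wfModel Δ M') = φ.eval (restrictP vocT M') :=
        eval_congr φ (fun a ha => hwfN a (fun hp => hfresh₁ φ hφ (hp ▸ ha)))
      rw [← he]
      exact (hBt (wfModel Δ M')).1 hBM' φ hφ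
    · intro a hv
      have hnp : a.pred ≠ Pt := fun hp => hPtvocT (hp ▸ hv)
      have e1 : wfModel Δ (restrictP vocT M') a = wfModel Δ M' a :=
        wfModel_congr Δ hbodies hNM' a hnp
      rw [e1]
      exact (hwfN a hnp).symm

end LazyMX
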